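/- Let a < 0, b ∈ ℝ, θ > 0, Q > 0 and Δ > 0. Then the function T ↦ (Δ/T) / ( (1/a)·Real.log( a·θ/(b + Q·T/Δ) + 1 ) ) tends to Q/θ as T → +∞ (i.e. Tendsto of this function along atTop to 𝓝 (Q/θ)). -/

import Mathlib

open Filter Real

lemma log_one_add_div_self : Filter.Tendsto (fun u : ℝ => Real.log (1 + u) / u)
    (nhdsWithin 0 {x | x ≠ 0}) (nhds 1) := by
  have h1 : HasDerivAt (fun u : ℝ => Real.log (1 + u)) 1 0 := by
    have := (Real.hasDerivAt_log (by norm_num : (1:ℝ) + 0 ≠ 0)).comp 0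
      ((hasDerivAt_id (0:ℝ)).const_add 1)
    simpa [Function.comp_def] using this
  have := hasDerivAt_iff_tendsto_slope.mp h1
  refine this.congr' ?_
  filter_upwards with v
  simp [slope_def_field, Real.log_one]

set_option maxHeartbeats 1000000 in
theorem amplitude_correction_limit (a b θ Q Δ : ℝ)
    (ha : a < 0) (hθ : 0 < θ) (hQ : 0 < Q) (hΔ : 0 < Δ) :
    Filter.Tendsto
      (fun T => (Δ / T) / ((1 / a) * Real.log (a * θ / (b + Q * T / Δ) + 1)))
      Filter.atTop (nhds (Q / θ)) := by
  set u : ℝ → ℝ := fun T => a * θ / (b + Q * T / Δ) with hu_def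
  -- denominator tends to atTop
  have hden : Tendsto (fun T : ℝ => b + Q * T / Δ) atTop atTop := by
    apply tendsto_atTop_add_const_left
    have : Tendsto (fun T : ℝ => (Q / Δ) * T) atTop atTop :=
      Tendsto.const_mul_atTop (div_pos hQ hΔ) tendsto_id
    refine this.congr fun T => by ring
  have hu0 : Tendsto u atTop (nhds 0) := tendsto_const_nhds.div_atTop hden
  have hpos : ∀ᶠ T in atTop, 0 < b + Q * T / Δ := hden.eventually_gt_atTop 0
  have hune : ∀ᶠ T in atTop, u T ≠ 0 := by
    filter_upwards [hpos] with T hT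
    exact div_ne_zero (by nlinarith) (ne_of_gt hT)
  have hu : Tendsto u atTop (nhdsWithin 0 {x : ℝ | x ≠ 0}) :=
    tendsto_nhdsWithin_iff.mpr ⟨hu0, hune⟩
  -- log(1 + u T)/u T → 1
  have hlog : Tendsto (fun T => Real.log (1 + u T) / u T) atTop (nhds 1) :=
    log_one_add_div_self.comp hu
  have hratio : Tendsto (fun T => u T / Real.log (1 + u T)) atTop (nhds 1) := by
    have := hlog.inv₀ one_ne_zero
    simp only [inv_div, inv_one] at this
    exact this
  -- the algebraic prefactor
  have hg : Tendsto (fun T : ℝ => (Δ * b / T + Q) / θ) atTop (nhds (Q / θ)) := by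
    have h1 : Tendsto (fun T : ℝ => Δ * b / T + Q) atTop (nhds (0 + Q)) :=
      (tendsto_const_nhds.div_atTop tendsto_id).add tendsto_const_nhds
    rw [zero_add] at h1
    exact h1.div_const θ
  have hmain : Tendsto (fun T => (Δ * b / T + Q) / θ * (u T / Real.log (1 + u T)))
      atTop (nhds (Q / θ)) := by
    have := hg.mul hratio
    simpa using this
  refine hmain.congr' ?_
  filter_upwards [hpos, eventually_gt_atTop 0] with T hT hT0
  have hTne : T ≠ 0 := ne_of_gt hT0
  have hdne : b + Q * T / Δ ≠ 0 := ne_of_gt hT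
  have hane : a ≠ 0 := ne_of_lt ha
  have hθne : θ ≠ 0 := ne_of_gt hθ
  show (Δ * b / T + Q) / θ * (u T / Real.log (1 + u T))
      = (Δ / T) / ((1 / a) * Real.log (a * θ / (b + Q * T / Δ) + 1))
  rw [add_comm (a * θ / (b + Q * T / Δ)) 1, hu_def]
  simp only
  set D : ℝ := b + Q * T / Δ with hD
  set L : ℝ := Real.log (1 + a * θ / D) with hL
  have hfac : Δ * b / T + Q = Δ / T * D := by
    rw [hD]; field_simp
  rw [hfac]
  rcases eq_or_ne L 0 with h0 | h0
  · simp [h0]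
  · field_simp
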